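/- For d ≥ 2 and p ∈ (0,1], with Q̃_λ = (λ/(1−(1−p)λ))(1 + log((1−(1−p)λ)/(1−(1−p)λ−pλ^d))/(d−1)), one has lim_{λ→1⁻} −Q̃_λ/log(1−λ) = 1/(p(d−1)). -/

import Mathlib

open Real Filter Set

lemma factor_aux (d : ℕ) (hd : 2 ≤ d) (p l : ℝ) :
    1 - (1 - p) * l - p * l ^ d
      = (1 - l) * (1 + p * (l * ∑ i ∈ Finset.range (d-1), l ^ i)) := by
  have h : (∑ i ∈ Finset.range (d-1), l ^ i) * (l - 1) = l ^ (d-1) - 1 :=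
    geom_sum_mul l (d-1)
  have hpow : l ^ d = l ^ (d-1) * l := by
    rw [← pow_succ, Nat.sub_add_cancel (by omega)]
  rw [hpow]
  linear_combination (p*l) * h

set_option maxHeartbeats 1000000 in
theorem stmt_18 (d : ℕ) (hd : 2 ≤ d) (p : ℝ) (hp : p ∈ Set.Ioc (0:ℝ) 1) :
    Filter.Tendsto
      (fun l : ℝ =>
        -((l / (1 - (1 - p) * l)) *
            (1 + Real.log ((1 - (1 - p) * l) / (1 - (1 - p) * l - p * l ^ d)) /
              ((d:ℝ) - 1))) / Real.log (1 - l))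
      (nhdsWithin 1 (Set.Iio 1)) (nhds (1 / (p * ((d:ℝ) - 1)))) := by
  obtain ⟨hp0, hp1⟩ := hp
  have hdR : (2:ℝ) ≤ (d:ℝ) := by exact_mod_cast hd
  have hD : ((d:ℝ) - 1) ≠ 0 := by linarith
  set L := nhdsWithin (1:ℝ) (Set.Iio 1) with hLdef
  set q : ℝ → ℝ := fun l => 1 + p * (l * ∑ i ∈ Finset.range (d-1), l ^ i) with hq
  -- limits of the pieces
  have hL1 : Tendsto (fun l : ℝ => 1 - l) L (nhdsWithin 0 (Set.Ioi 0)) := by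
    rw [tendsto_nhdsWithin_iff]
    constructor
    · have : Tendsto (fun l : ℝ => 1 - l) (nhds 1) (nhds (1 - 1)) :=
        (continuous_const.sub continuous_id).tendsto 1
      simpa using this.mono_left nhdsWithin_le_nhds
    · filter_upwards [self_mem_nhdsWithin] with l hl
      simp only [Set.mem_Iio] at hl
      simp [Set.mem_Ioi]; linarith
  have hlogbot : Tendsto (fun l : ℝ => Real.log (1 - l)) L atBot :=
    Real.tendsto_log_nhdsGT_zero.comp hL1
  have hinv : Tendsto (fun l : ℝ => (Real.log (1 - l))⁻¹) L (nhds 0) := by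
    have h1 : Tendsto (fun l : ℝ => -Real.log (1 - l)) L atTop :=
      tendsto_neg_atBot_atTop.comp hlogbot
    have h2 := h1.inv_tendsto_atTop
    have h3 : Tendsto (fun l : ℝ => -((-Real.log (1 - l))⁻¹)) L (nhds (-0)) :=
      (h2.neg)
    simpa [inv_neg] using h3
  have hA : Tendsto (fun l : ℝ => l / (1 - (1 - p) * l)) L (nhds (1 / p)) := by
    have hc : ContinuousAt (fun l : ℝ => l / (1 - (1 - p) * l)) 1 := by
      apply ContinuousAt.div continuousAt_id (by fun_prop)
      simp; linarith
    have h2 : Tendsto (fun l : ℝ => l / (1 - (1 - p) * l)) L (nhds (1 / (1 - (1 - p) * 1))) :=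
      hc.tendsto.mono_left nhdsWithin_le_nhds
    rwa [show (1:ℝ) - (1 - p) * 1 = p by ring] at h2
  have hlogB : Tendsto (fun l : ℝ => Real.log (1 - (1 - p) * l)) L (nhds (Real.log p)) := by
    have hc : ContinuousAt (fun l : ℝ => Real.log (1 - (1 - p) * l)) 1 := by
      apply (Real.continuousAt_log ?_).comp (by fun_prop)
      simp; linarith
    have h2 : Tendsto (fun l : ℝ => Real.log (1 - (1 - p) * l)) L
        (nhds (Real.log (1 - (1 - p) * 1))) := hc.tendsto.mono_left nhdsWithin_le_nhds
    rwa [show (1:ℝ) - (1 - p) * 1 = p by ring] at h2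
  have hq1 : q 1 = 1 + p * ((d:ℝ) - 1) := by
    simp [hq]
    left
    push_cast [Nat.cast_sub (by omega : 1 ≤ d)]
    ring
  have hq1pos : 0 < q 1 := by rw [hq1]; nlinarith
  have hlogq : Tendsto (fun l : ℝ => Real.log (q l)) L (nhds (Real.log (q 1))) := by
    have hc : ContinuousAt (fun l : ℝ => Real.log (q l)) 1 := by
      apply (Real.continuousAt_log hq1pos.ne').comp
      fun_prop
    exact (hc.tendsto.mono_left nhdsWithin_le_nhds : _)
  -- the nicer function G
  have hG : Tendsto (fun l : ℝ =>
      (l / (1 - (1 - p) * l)) *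
        (-(Real.log (1 - l))⁻¹
          - Real.log (1 - (1 - p) * l) * ((d:ℝ) - 1)⁻¹ * (Real.log (1 - l))⁻¹
          + ((d:ℝ) - 1)⁻¹
          + Real.log (q l) * ((d:ℝ) - 1)⁻¹ * (Real.log (1 - l))⁻¹)) L
      (nhds ((1/p) * (-(0:ℝ) - Real.log p * ((d:ℝ) - 1)⁻¹ * 0 + ((d:ℝ) - 1)⁻¹
          + Real.log (q 1) * ((d:ℝ) - 1)⁻¹ * 0))) := by
    exact hA.mul ((((hinv.neg).sub ((hlogB.mul tendsto_const_nhds).mul hinv)).add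
      tendsto_const_nhds).add ((hlogq.mul tendsto_const_nhds).mul hinv))
  have hval : (1/p) * (-(0:ℝ) - Real.log p * ((d:ℝ) - 1)⁻¹ * 0 + ((d:ℝ) - 1)⁻¹
      + Real.log (q 1) * ((d:ℝ) - 1)⁻¹ * 0) = 1 / (p * ((d:ℝ) - 1)) := by
    field_simp
    ring
  rw [hval] at hG
  -- eventual equality
  refine hG.congr' ?_
  filter_upwards [Ioo_mem_nhdsLT_of_mem (show (1:ℝ) ∈ Set.Ioc 0 1 by constructor <;> norm_num)]
    with l hl
  obtain ⟨hl0, hl1⟩ := hl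
  have h1l : 0 < 1 - l := by linarith
  have hB : 0 < 1 - (1 - p) * l := by nlinarith
  have hqpos : 0 < q l := by
    have hs : 0 ≤ ∑ i ∈ Finset.range (d-1), l ^ i :=
      Finset.sum_nonneg fun i _ => pow_nonneg hl0.le i
    have : 0 ≤ p * (l * ∑ i ∈ Finset.range (d-1), l ^ i) := by positivity
    simp only [hq]; linarith
  have hfac : 1 - (1 - p) * l - p * l ^ d = (1 - l) * q l := factor_aux d hd p l
  have hfpos : 0 < 1 - (1 - p) * l - p * l ^ d := by
    rw [hfac]; exact mul_pos h1l hqpos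
  have hlogneg : Real.log (1 - l) < 0 := Real.log_neg h1l (by linarith)
  have hlogne : Real.log (1 - l) ≠ 0 := hlogneg.ne
  rw [Real.log_div hB.ne' hfpos.ne', hfac, Real.log_mul h1l.ne' hqpos.ne']
  field_simp [hlogne, hD, hB.ne']
  ring
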